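/- arXiv:1511.09389 — 5 statements merged into one kernel-verified Lean document; each statement's English description precedes it below -/
import Mathlib

section
/- Let H = (V, ℰ) be a hypergraph, let G be a representative support for H with vertex set W ⊆ V, and let c : V ∖ W → W be a function such that c(v) covers v for every v ∈ V ∖ W. Then the graph G′ on vertex set V whose edges are the edges of G together with the edges {v, c(v)} for all v ∈ V ∖ W is a support for H; moreover every vertex of V ∖ W has degree one in G′. -/
/-- A hypergraph: a finite vertex set `V ⊆ ℕ` together with a finite family of
hyperedges, each a subset of `V` of size at least 2. -/
structure FinHypergraph where
  V : Finset ℕ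
  E : Finset (Finset ℕ)
  edge_sub : ∀ F ∈ E, F ⊆ V
  edge_card : ∀ F ∈ E, 2 ≤ F.card

namespace FinHypergraph

/-- `ℰ(v)`: the set of hyperedges incident with `v`. -/
def edgesAt (H : FinHypergraph) (v : ℕ) : Finset (Finset ℕ) :=
  H.E.filter (fun F => v ∈ F)

/-- `w` covers `v` if `ℰ(v) ⊆ ℰ(w)`. -/
def Covers (H : FinHypergraph) (w v : ℕ) : Prop :=
  H.edgesAt v ⊆ H.edgesAt w

/-- `u` and `v` are twins if `ℰ(u) = ℰ(v)`. -/
def AreTwins (H : FinHypergraph) (u v : ℕ) : Prop :=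
  H.edgesAt u = H.edgesAt v

/-- The twin class of `v`: all vertices with the same incident hyperedges as `v`. -/
def twinClass (H : FinHypergraph) (v : ℕ) : Finset ℕ :=
  H.V.filter (fun u => H.edgesAt u = H.edgesAt v)

/-- `H − v`: delete vertex `v`, removing it from every hyperedge and discarding
   the resulting sets of size less than 2. -/
def delete (H : FinHypergraph) (v : ℕ) : FinHypergraph where
  V := H.V.erase v
  E := (H.E.image (fun F => F.erase v)).filter (fun F => 2 ≤ F.card)
  edge_sub := by
    intro F hF
    simp only [Finset.mem_filter, Finset.mem_image] at hF
    obtain ⟨⟨F₀, hF₀, rfl⟩, -⟩ := hF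
    intro x hx
    exact Finset.mem_erase.mpr ⟨(Finset.mem_erase.mp hx).1,
      H.edge_sub F₀ hF₀ (Finset.mem_erase.mp hx).2⟩
  edge_card := fun F hF => (Finset.mem_filter.mp hF).2

end FinHypergraph

/-- All edges of the graph `G` have both endpoints in `W`
    (i.e. `G` is a graph on the vertex set `W`). -/
def EdgesWithin (G : SimpleGraph ℕ) (W : Finset ℕ) : Prop :=
  ∀ a b, G.Adj a b → a ∈ W ∧ b ∈ W

/-- `G` is a support for `H`: a graph on the vertex set of `H` in which every
    hyperedge induces a connected subgraph. -/
def IsSupport (H : FinHypergraph) (G : SimpleGraph ℕ) : Prop :=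
  EdgesWithin G H.V ∧ ∀ F ∈ H.E, ((G.induce (F : Set ℕ)).Connected)

/-- `G` is a representative support for `H` with vertex set `W ⊆ H.V`:
    (i) every hyperedge `F` with `|F ∩ W| ≥ 2` induces (on `F ∩ W`) a connected
    subgraph of `G`, and (ii) every vertex outside `W` is covered by a vertex of `W`. -/
def IsRepSupport (H : FinHypergraph) (W : Finset ℕ) (G : SimpleGraph ℕ) : Prop :=
  W ⊆ H.V ∧ EdgesWithin G W ∧
    (∀ F ∈ H.E, 2 ≤ (F ∩ W).card → ((G.induce ((F ∩ W : Finset ℕ) : Set ℕ)).Connected)) ∧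
    (∀ v ∈ H.V \ W, ∃ w ∈ W, H.Covers w v)

lemma aux_induce_connected (G' : SimpleGraph ℕ) (s t : Set ℕ) (hst : s ⊆ t)
    (hs : (G'.induce s).Connected)
    (h : ∀ x ∈ t, x ∉ s → ∃ y ∈ s, G'.Adj x y) :
    (G'.induce t).Connected := by
  have hne : t.Nonempty := by
    obtain ⟨⟨x, hx⟩⟩ := hs.nonempty
    exact ⟨x, hst hx⟩
  rw [SimpleGraph.connected_iff]
  refine ⟨?_, ⟨⟨hne.choose, hne.choose_spec⟩⟩⟩
  have key : ∀ z (hz : z ∈ t), ∃ z' hz', (G'.induce t).Reachable ⟨z, hz⟩ ⟨z', hst hz'⟩ := by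
    intro z hz
    by_cases hzs : z ∈ s
    · exact ⟨z, hzs, SimpleGraph.Reachable.refl _⟩
    · obtain ⟨y, hy, hadj⟩ := h z hz hzs
      exact ⟨y, hy, SimpleGraph.Adj.reachable (by exact hadj)⟩
  rintro ⟨x, hx⟩ ⟨y, hy⟩
  obtain ⟨x', hx', rx⟩ := key x hx
  obtain ⟨y', hy', ry⟩ := key y hy
  have rmid : (G'.induce t).Reachable ⟨x', hst hx'⟩ ⟨y', hst hy'⟩ :=
    (hs.preconnected ⟨x', hx'⟩ ⟨y', hy'⟩).map
      (⟨Set.inclusion hst, fun {a b} hab => hab⟩ : G'.induce s →g G'.induce t)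
  exact rx.trans (rmid.trans ry.symm)

/-- Attaching each vertex `v ∈ V ∖ W` as a pendant to a covering
vertex `c v ∈ W` turns a representative support `G` into a support `G'` of `H`,
in which every vertex of `V ∖ W` has degree one. -/
theorem representative_support_extension
    (H : FinHypergraph) (W : Finset ℕ) (G : SimpleGraph ℕ)
    (hG : IsRepSupport H W G)
    (c : ℕ → ℕ)
    (hc : ∀ v ∈ H.V \ W, c v ∈ W ∧ H.Covers (c v) v)
    (G' : SimpleGraph ℕ)
    (hG' : G' = G ⊔ SimpleGraph.fromEdgeSet {e : Sym2 ℕ | ∃ v ∈ H.V \ W, e = s(v, c v)}) :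
    IsSupport H G' ∧ ∀ v ∈ H.V \ W, ∃! u, G'.Adj v u := by
  obtain ⟨hWV, hEW, hconn, -⟩ := hG
  have hle : G ≤ G' := hG' ▸ le_sup_left
  have hcov : ∀ v ∈ H.V \ W, ∀ F ∈ H.E, v ∈ F → c v ∈ F := by
    intro v hv F hF hvF
    have h2 := (hc v hv).2
    have : F ∈ H.edgesAt (c v) := h2 (Finset.mem_filter.mpr ⟨hF, hvF⟩)
    exact (Finset.mem_filter.mp this).2
  have hadjc : ∀ v ∈ H.V \ W, G'.Adj v (c v) := by
    intro v hv
    have hne : v ≠ c v := by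
      intro h
      exact (Finset.mem_sdiff.mp hv).2 (h ▸ (hc v hv).1)
    rw [hG', SimpleGraph.sup_adj]
    right
    rw [SimpleGraph.fromEdgeSet_adj]
    exact ⟨⟨v, hv, rfl⟩, hne⟩
  constructor
  · constructor
    · intro a b hab
      rw [hG', SimpleGraph.sup_adj] at hab
      rcases hab with hab | hab
      · exact ⟨hWV (hEW a b hab).1, hWV (hEW a b hab).2⟩
      · rw [SimpleGraph.fromEdgeSet_adj] at hab
        obtain ⟨⟨v, hv, heq⟩, -⟩ := hab
        rw [Sym2.eq_iff] at heq
        rcases heq with ⟨rfl, rfl⟩ | ⟨rfl, rfl⟩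
        · exact ⟨(Finset.mem_sdiff.mp hv).1, hWV (hc a hv).1⟩
        · exact ⟨hWV (hc b hv).1, (Finset.mem_sdiff.mp hv).1⟩
    · intro F hF
      have hFV : F ⊆ H.V := H.edge_sub F hF
      have hmem : ∀ x ∈ F, x ∉ W → x ∈ H.V \ W := fun x hx hxW =>
        Finset.mem_sdiff.mpr ⟨hFV hx, hxW⟩
      have hFne : F.Nonempty := Finset.card_pos.mp (by have := H.edge_card F hF; omega)
      have hFWne : (F ∩ W).Nonempty := by
        obtain ⟨x, hx⟩ := hFne
        by_cases hxW : x ∈ W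
        · exact ⟨x, Finset.mem_inter.mpr ⟨hx, hxW⟩⟩
        · have hxVW := hmem x hx hxW
          exact ⟨c x, Finset.mem_inter.mpr ⟨hcov x hxVW F hF hx, (hc x hxVW).1⟩⟩
      have hsub : ((F ∩ W : Finset ℕ) : Set ℕ) ⊆ (F : Set ℕ) := by
        intro x hx
        exact Finset.mem_coe.mpr (Finset.mem_inter.mp (Finset.mem_coe.mp hx)).1
      have hsconn : (G'.induce ((F ∩ W : Finset ℕ) : Set ℕ)).Connected := by
        by_cases h2 : 2 ≤ (F ∩ W).card
        · exact (hconn F hF h2).mono (fun a b hab => hle hab)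
        · have hsing : (F ∩ W).card = 1 := by
            have := Finset.card_pos.mpr hFWne; omega
          have hss : ∀ a ∈ F ∩ W, ∀ b ∈ F ∩ W, a = b :=
            fun a ha b hb => Finset.card_le_one.mp (le_of_eq hsing) a ha b hb
          rw [SimpleGraph.connected_iff]
          refine ⟨?_, ⟨⟨hFWne.choose, Finset.mem_coe.mpr hFWne.choose_spec⟩⟩⟩
          rintro ⟨a, ha⟩ ⟨b, hb⟩
          have : a = b := hss a (Finset.mem_coe.mp ha) b (Finset.mem_coe.mp hb)
          subst this
          rfl
      refine aux_induce_connected G' _ _ hsub hsconn ?_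
      intro x hx hxs
      have hxF : x ∈ F := Finset.mem_coe.mp hx
      have hxW : x ∉ W := fun hxW =>
        hxs (Finset.mem_coe.mpr (Finset.mem_inter.mpr ⟨hxF, hxW⟩))
      have hxVW := hmem x hxF hxW
      exact ⟨c x, Finset.mem_coe.mpr
        (Finset.mem_inter.mpr ⟨hcov x hxVW F hF hxF, (hc x hxVW).1⟩), hadjc x hxVW⟩
  · intro v hv
    refine ⟨c v, hadjc v hv, ?_⟩
    intro u hu
    rw [hG', SimpleGraph.sup_adj] at hu
    rcases hu with hu | hu
    · exact absurd (hEW v u hu).1 (Finset.mem_sdiff.mp hv).2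
    · rw [SimpleGraph.fromEdgeSet_adj] at hu
      obtain ⟨⟨v', hv', heq⟩, hne⟩ := hu
      rw [Sym2.eq_iff] at heq
      rcases heq with ⟨h1, h2⟩ | ⟨h1, h2⟩
      · rw [h2, ← h1]
      · exfalso
        exact (Finset.mem_sdiff.mp hv).2 (h1 ▸ (hc v' hv').1)
end

section
/- If H = (V, ℰ) is a hypergraph that has a representative support G with vertex set W ⊆ V, then H has a support G′ (a graph on vertex set V) in which every vertex of V ∖ W has degree one. -/
/-- If `H` has a representative support with vertex set `W ⊆ V`,
then `H` has a support in which every vertex of `V ∖ W` has degree one. -/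
theorem exists_support_with_pendant_outside
    (H : FinHypergraph) (W : Finset ℕ) (G : SimpleGraph ℕ)
    (hG : IsRepSupport H W G) :
    ∃ G' : SimpleGraph ℕ, IsSupport H G' ∧ ∀ v ∈ H.V \ W, ∃! u, G'.Adj v u := by
  obtain ⟨hWV, hEW, hconn, hcov⟩ := hG
  choose! c hcW hcCov using hcov
  -- the new graph: G plus pendant edges from each v ∈ V \ W to c v
  set G' : SimpleGraph ℕ := SimpleGraph.fromRel
    (fun a b => G.Adj a b ∨ (a ∈ H.V \ W ∧ b = c a)) with hG'def
  have hadj : ∀ a b, G'.Adj a b ↔ a ≠ b ∧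
      (G.Adj a b ∨ (a ∈ H.V \ W ∧ b = c a) ∨ (b ∈ H.V \ W ∧ a = c b)) := by
    intro a b
    constructor
    · rintro ⟨hne, h | h⟩
      · rcases h with h | h
        · exact ⟨hne, Or.inl h⟩
        · exact ⟨hne, Or.inr (Or.inl h)⟩
      · rcases h with h | h
        · exact ⟨hne, Or.inl h.symm⟩
        · exact ⟨hne, Or.inr (Or.inr h)⟩
    · rintro ⟨hne, h | h | h⟩
      · exact ⟨hne, Or.inl (Or.inl h)⟩
      · exact ⟨hne, Or.inl (Or.inr h)⟩
      · exact ⟨hne, Or.inr (Or.inr h)⟩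
  have hcne : ∀ v ∈ H.V \ W, v ≠ c v := by
    intro v hv heq
    have := hcW v hv
    rw [← heq] at this
    exact (Finset.mem_sdiff.mp hv).2 this
  have hGleG' : ∀ a b, G.Adj a b → G'.Adj a b := by
    intro a b h
    exact (hadj a b).mpr ⟨h.ne, Or.inl h⟩
  refine ⟨G', ⟨?_, ?_⟩, ?_⟩
  · -- EdgesWithin G' H.V
    intro a b hab
    rcases (hadj a b).mp hab with ⟨hne, h | h | h⟩
    · exact ⟨hWV (hEW a b h).1, hWV (hEW a b h).2⟩
    · exact ⟨(Finset.mem_sdiff.mp h.1).1, h.2 ▸ hWV (hcW a h.1)⟩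
    · exact ⟨h.2 ▸ hWV (hcW b h.1), (Finset.mem_sdiff.mp h.1).1⟩
  · -- connectivity of each hyperedge
    intro F hF
    have hFV : F ⊆ H.V := H.edge_sub F hF
    -- for x ∈ F \ W, c x ∈ F ∩ W
    have hcF : ∀ x ∈ F, x ∉ W → c x ∈ F ∩ W := by
      intro x hxF hxW
      have hx : x ∈ H.V \ W := Finset.mem_sdiff.mpr ⟨hFV hxF, hxW⟩
      have hFx : F ∈ H.edgesAt x := Finset.mem_filter.mpr ⟨hF, hxF⟩
      have hFc : F ∈ H.edgesAt (c x) := hcCov x hx hFx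
      exact Finset.mem_inter.mpr ⟨(Finset.mem_filter.mp hFc).2, hcW x hx⟩
    -- claim A: every vertex of F reaches some vertex of F ∩ W
    have claimA : ∀ x (hx : x ∈ F), ∃ w, ∃ (hw : w ∈ F ∩ W),
        (G'.induce (F : Set ℕ)).Reachable ⟨x, hx⟩ ⟨w, (Finset.mem_inter.mp hw).1⟩ := by
      intro x hx
      by_cases hxW : x ∈ W
      · exact ⟨x, Finset.mem_inter.mpr ⟨hx, hxW⟩, SimpleGraph.Reachable.refl _⟩
      · have hcx := hcF x hx hxW
        have hxVW : x ∈ H.V \ W := Finset.mem_sdiff.mpr ⟨hFV hx, hxW⟩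
        refine ⟨c x, hcx, SimpleGraph.Adj.reachable ?_⟩
        exact (hadj x (c x)).mpr ⟨hcne x hxVW, Or.inr (Or.inl ⟨hxVW, rfl⟩)⟩
    -- claim B: any two vertices of F ∩ W are connected in the induced graph
    have claimB : ∀ w₁ w₂, ∀ (h₁ : w₁ ∈ F ∩ W) (h₂ : w₂ ∈ F ∩ W),
        (G'.induce (F : Set ℕ)).Reachable ⟨w₁, (Finset.mem_inter.mp h₁).1⟩
          ⟨w₂, (Finset.mem_inter.mp h₂).1⟩ := by
      intro w₁ w₂ h₁ h₂
      by_cases hcard : 2 ≤ (F ∩ W).card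
      · have hc := (hconn F hF hcard)
        have hreach : (G.induce ((F ∩ W : Finset ℕ) : Set ℕ)).Reachable
            ⟨w₁, by exact_mod_cast h₁⟩ ⟨w₂, by exact_mod_cast h₂⟩ := hc.preconnected _ _
        -- map into G'.induce F
        let φ : G.induce ((F ∩ W : Finset ℕ) : Set ℕ) →g G'.induce (F : Set ℕ) :=
          { toFun := fun a => ⟨a.1, by
              have : (a : ℕ) ∈ F ∩ W := by exact_mod_cast a.2
              exact (Finset.mem_inter.mp this).1⟩
            map_rel' := by
              intro a b hab
              exact hGleG' _ _ hab }
        exact hreach.map φ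
      · push_neg at hcard
        have : w₁ = w₂ := by
          have h1 := Finset.card_le_one.mp (Nat.lt_succ_iff.mp hcard)
          exact h1 w₁ h₁ w₂ h₂
        subst this
        exact SimpleGraph.Reachable.refl _
    rw [SimpleGraph.connected_iff]
    constructor
    · intro x y
      obtain ⟨x, hx⟩ := x
      obtain ⟨y, hy⟩ := y
      have hxF : x ∈ F := hx
      have hyF : y ∈ F := hy
      obtain ⟨wx, hwx, hrx⟩ := claimA x hxF
      obtain ⟨wy, hwy, hry⟩ := claimA y hyF
      exact hrx.trans ((claimB wx wy hwx hwy).trans hry.symm)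
    · have : 2 ≤ F.card := H.edge_card F hF
      have hne : F.Nonempty := Finset.card_pos.mp (by omega)
      obtain ⟨x, hx⟩ := hne
      exact ⟨⟨x, hx⟩⟩
  · -- pendant condition
    intro v hv
    refine ⟨c v, (hadj v (c v)).mpr ⟨hcne v hv, Or.inr (Or.inl ⟨hv, rfl⟩)⟩, ?_⟩
    intro u hu
    rcases (hadj v u).mp hu with ⟨hne, h | h | h⟩
    · exact absurd (hEW v u h).1 (Finset.mem_sdiff.mp hv).2
    · exact h.2
    · exact absurd (h.2 ▸ hcW u h.1) (Finset.mem_sdiff.mp hv).2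
end

section
/- Let G be a support for a hypergraph H = (V, ℰ) and let v ∈ V be a vertex of degree at most one in G. Then the induced subgraph of G on V ∖ {v} is a support for the hypergraph H − v. -/
/-- The subgraph of `G` induced on the complement of `{v}` (as a graph on `ℕ`):
all edges of `G` avoiding `v`. -/
def SimpleGraph.deleteVertex (G : SimpleGraph ℕ) (v : ℕ) : SimpleGraph ℕ where
  Adj a b := G.Adj a b ∧ a ≠ v ∧ b ≠ v
  symm := ⟨fun a b h => ⟨h.1.symm, h.2.2, h.2.1⟩⟩
  loopless := ⟨fun a h => G.loopless.irrefl a h.1⟩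


private lemma walk_avoid_aux (G : SimpleGraph ℕ) (v : ℕ)
    (hdeg : ∀ a b, G.Adj v a → G.Adj v b → a = b) (F : Finset ℕ) :
    ∀ (n : ℕ) (a b : ℕ) (p : G.Walk a b), p.length = n → a ≠ v → b ≠ v →
      (∀ x ∈ p.support, x ∈ F) →
      ∀ (ha : a ∈ ((F.erase v : Finset ℕ) : Set ℕ)) (hb : b ∈ ((F.erase v : Finset ℕ) : Set ℕ)),
      ((G.deleteVertex v).induce ((F.erase v : Finset ℕ) : Set ℕ)).Reachable ⟨a, ha⟩ ⟨b, hb⟩ := by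
  intro n
  induction n using Nat.strong_induction_on with
  | _ n ih =>
    intro a b p hlen ha hb hsup ha' hb'
    cases p with
    | nil => exact SimpleGraph.Reachable.refl _
    | cons h q =>
      rename_i c
      by_cases hc : c = v
      · subst hc
        cases q with
        | nil => exact absurd rfl hb
        | cons h2 r =>
          rename_i d
          have had : a = d := hdeg a d h.symm h2
          subst had
          have : r.length < n := by
            simp only [SimpleGraph.Walk.length_cons] at hlen
            omega
          exact ih r.length this a b r rfl ha hb
            (fun x hx => hsup x (by simp [SimpleGraph.Walk.support_cons, hx])) ha' hb'
      · have hcF : c ∈ F := hsup c (by simp [SimpleGraph.Walk.support_cons])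
        have hc' : c ∈ ((F.erase v : Finset ℕ) : Set ℕ) := by
          simp [Finset.mem_erase, hc, hcF]
        have hq : q.length < n := by
          simp only [SimpleGraph.Walk.length_cons] at hlen
          omega
        have step : ((G.deleteVertex v).induce ((F.erase v : Finset ℕ) : Set ℕ)).Adj
            ⟨a, ha'⟩ ⟨c, hc'⟩ := by
          exact ⟨h, ha, hc⟩
        exact step.reachable.trans
          (ih q.length hq c b q rfl hc hb
            (fun x hx => hsup x (by simp [SimpleGraph.Walk.support_cons, hx])) hc' hb')

/-- If `G` is a support for `H` and `v` has degree at most one in `G`,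
then the induced subgraph of `G` on `V ∖ {v}` is a support for `H − v`. -/
theorem support_delete_degree_le_one
    (H : FinHypergraph) (G : SimpleGraph ℕ) (hG : IsSupport H G)
    (v : ℕ) (hv : v ∈ H.V)
    (hdeg : ∀ a b, G.Adj v a → G.Adj v b → a = b) :
    IsSupport (H.delete v) (G.deleteVertex v) := by
  constructor
  · intro a b hab
    exact ⟨Finset.mem_erase.mpr ⟨hab.2.1, (hG.1 a b hab.1).1⟩,
      Finset.mem_erase.mpr ⟨hab.2.2, (hG.1 a b hab.1).2⟩⟩
  · intro F' hF'
    simp only [FinHypergraph.delete, Finset.mem_filter, Finset.mem_image] at hF'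
    obtain ⟨⟨F, hF, rfl⟩, hcard⟩ := hF'
    have hne : Nonempty ((F.erase v : Finset ℕ) : Set ℕ) := by
      obtain ⟨x, hx⟩ := Finset.card_pos.mp (by omega : 0 < (F.erase v).card)
      exact ⟨⟨x, by exact_mod_cast hx⟩⟩
    haveI := hne
    refine ⟨?_⟩
    rintro ⟨a, ha⟩ ⟨b, hb⟩
    have haF : a ∈ F.erase v := ha
    have hbF : b ∈ F.erase v := hb
    have haF2 : a ∈ F := Finset.mem_of_mem_erase haF
    have hbF2 : b ∈ F := Finset.mem_of_mem_erase hbF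
    have hconn := (hG.2 F hF)
    obtain ⟨p0⟩ := hconn ⟨a, by exact_mod_cast haF2⟩ ⟨b, by exact_mod_cast hbF2⟩
    let emb : G.induce ((F : Finset ℕ) : Set ℕ) ↪g G := SimpleGraph.Embedding.induce _
    let p : G.Walk a b := (p0.map emb.toHom).copy rfl rfl
    have hsup : ∀ x ∈ p.support, x ∈ F := by
      intro x hx
      change x ∈ (p0.map emb.toHom).support at hx
      rw [SimpleGraph.Walk.support_map] at hx
      obtain ⟨y, hy, rfl⟩ := List.mem_map.mp hx
      exact y.2
    exact walk_avoid_aux G v hdeg F p.length a b p rfl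
      (Finset.mem_erase.mp haF).1 (Finset.mem_erase.mp hbF).1 hsup ha hb
end

section
/- Let G be a support for a hypergraph H = (V, ℰ) and let π : V → V be a permutation such that ℰ(π(w)) = ℰ(w) for every w ∈ V (that is, π maps every vertex to a twin of itself). Then the image graph π(G), with edge set {{π(a), π(b)} : {a, b} an edge of G}, is a support for H. -/
/-- If `G` is a support for `H` and `π` is a permutation of `V`
mapping every vertex to a twin of itself, then the image graph `π(G)` (with
edge set `{{π a, π b} : {a, b} ∈ E(G)}`) is a support for `H`. -/
theorem support_image_twin_permutation
    (H : FinHypergraph) (G : SimpleGraph ℕ) (hG : IsSupport H G)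
    (π : ℕ → ℕ) (hπ : Set.BijOn π (H.V : Set ℕ) (H.V : Set ℕ))
    (htwin : ∀ w ∈ H.V, H.edgesAt (π w) = H.edgesAt w) :
    IsSupport H (SimpleGraph.fromEdgeSet (Sym2.map π '' G.edgeSet)) := by
  obtain ⟨hGW, hGconn⟩ := hG
  -- membership transfer: for v ∈ V and F ∈ E, v ∈ F ↔ π v ∈ F
  have hmem : ∀ v ∈ H.V, ∀ F ∈ H.E, (v ∈ F ↔ π v ∈ F) := by
    intro v hv F hF
    have h := htwin v hv
    constructor
    · intro hvF
      have : F ∈ H.edgesAt v := Finset.mem_filter.mpr ⟨hF, hvF⟩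
      rw [← h] at this
      exact (Finset.mem_filter.mp this).2
    · intro hvF
      have : F ∈ H.edgesAt (π v) := Finset.mem_filter.mpr ⟨hF, hvF⟩
      rw [h] at this
      exact (Finset.mem_filter.mp this).2
  set G' := SimpleGraph.fromEdgeSet (Sym2.map π '' G.edgeSet) with hG'
  have hadj : ∀ a b, G'.Adj a b ↔ (Sym2.mk a b ∈ Sym2.map π '' G.edgeSet ∧ a ≠ b) := by
    intro a b; rw [hG']; exact SimpleGraph.fromEdgeSet_adj _
  have hEW : EdgesWithin G' H.V := by
    intro a b hab
    obtain ⟨⟨e, he, hmap⟩, hne⟩ := (hadj a b).mp hab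
    induction e with
    | h x y =>
      rw [Sym2.map_pair_eq, Sym2.eq_iff] at hmap
      have hx : x ∈ H.V := (hGW x y he).1
      have hy : y ∈ H.V := (hGW x y he).2
      rcases hmap with ⟨h1, h2⟩ | ⟨h1, h2⟩
      · exact ⟨h1 ▸ hπ.mapsTo hx, h2 ▸ hπ.mapsTo hy⟩
      · exact ⟨h2 ▸ hπ.mapsTo hy, h1 ▸ hπ.mapsTo hx⟩
  refine ⟨hEW, ?_⟩
  intro F hF
  have hFV : (F : Set ℕ) ⊆ (H.V : Set ℕ) := fun x hx => H.edge_sub F hF hx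
  -- π maps F to F
  have hmapsF : Set.MapsTo π (F : Set ℕ) (F : Set ℕ) := fun x hx =>
    (hmem x (hFV hx) F hF).mp hx
  have hinjF : Set.InjOn π (F : Set ℕ) := hπ.injOn.mono hFV
  have hbijF : Set.BijOn π (F : Set ℕ) (F : Set ℕ) :=
    (Set.Finite.injOn_iff_bijOn_of_mapsTo (F.finite_toSet) hmapsF).mp hinjF
  -- the graph hom
  let f : ↑(F : Set ℕ) → ↑(F : Set ℕ) := fun x => ⟨π ↑x, hmapsF x.2⟩
  have hhom : ∀ x y : ↑(F : Set ℕ), (G.induce (F : Set ℕ)).Adj x y →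
      (G'.induce (F : Set ℕ)).Adj (f x) (f y) := by
    intro x y hxy
    have hx : (x : ℕ) ∈ H.V := hFV x.2
    have hy : (y : ℕ) ∈ H.V := hFV y.2
    have hGxy : G.Adj x y := hxy
    refine (hadj (π x) (π y)).mpr ⟨⟨Sym2.mk (x : ℕ) (y : ℕ), hGxy, ?_⟩, ?_⟩
    · rw [Sym2.map_pair_eq]
    · intro h
      exact hGxy.ne (hπ.injOn hx hy h)
  have hsurj : Function.Surjective f := by
    intro ⟨y, hy⟩
    obtain ⟨x, hx, hxy⟩ := hbijF.surjOn hy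
    exact ⟨⟨x, hx⟩, Subtype.ext hxy⟩
  exact SimpleGraph.Connected.map ⟨f, @hhom⟩ hsurj (hGconn F hF)
end

section
/- Let ℓ ≥ 1, let H = (V, ℰ) be a hypergraph, and let v ∈ V be a vertex whose twin class has at least ℓ elements. If H has a representative support with fewer than ℓ vertices, then H − v has a support in which fewer than ℓ vertices have degree greater than one. -/
lemma key_pendant (ℓ : ℕ) (H : FinHypergraph) (v : ℕ)
    (W : Finset ℕ) (G : SimpleGraph ℕ) (h : IsRepSupport H W G)
    (hW : W.card < ℓ) (hvW : v ∉ W) :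
    ∃ G' : SimpleGraph ℕ, IsSupport (H.delete v) G' ∧
      ((((H.delete v).V : Set ℕ) ∩
        {x : ℕ | ∃ a b : ℕ, a ≠ b ∧ G'.Adj x a ∧ G'.Adj x b}).ncard < ℓ) := by
  obtain ⟨hWV, hEW, hconn, hcov⟩ := h
  have hcov' : ∀ x, x ∈ H.V → x ∉ W → ∃ w, w ∈ W ∧ H.Covers w x := by
    intro x h1 h2
    obtain ⟨w, hw1, hw2⟩ := hcov x (Finset.mem_sdiff.mpr ⟨h1, h2⟩)
    exact ⟨w, hw1, hw2⟩
  choose! f hfW hfC using hcov'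
  set G' : SimpleGraph ℕ :=
    { Adj := fun a b => a ≠ b ∧ (G.Adj a b ∨
        (a ∈ H.V ∧ a ∉ W ∧ a ≠ v ∧ b = f a) ∨
        (b ∈ H.V ∧ b ∉ W ∧ b ≠ v ∧ a = f b)),
      symm := by
        constructor
        rintro a b ⟨h1, h2⟩
        refine ⟨h1.symm, ?_⟩
        rcases h2 with h | h | h
        · exact Or.inl h.symm
        · exact Or.inr (Or.inr h)
        · exact Or.inr (Or.inl h)
      loopless := ⟨fun a h => h.1 rfl⟩ } with hG'def
  have hAdjIff : ∀ a b, G'.Adj a b ↔ a ≠ b ∧ (G.Adj a b ∨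
        (a ∈ H.V ∧ a ∉ W ∧ a ≠ v ∧ b = f a) ∨
        (b ∈ H.V ∧ b ∉ W ∧ b ≠ v ∧ a = f b)) := fun a b => Iff.rfl
  have hWmem : ∀ x ∈ W, x ∈ (H.delete v).V := by
    intro x hx
    exact Finset.mem_erase.mpr ⟨fun hxv => hvW (hxv ▸ hx), hWV hx⟩
  have hEW' : EdgesWithin G' (H.delete v).V := by
    rintro a b ⟨hne, h2⟩
    rcases h2 with h | ⟨h1, h2, h3, h4⟩ | ⟨h1, h2, h3, h4⟩
    · obtain ⟨ha, hb⟩ := hEW a b h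
      exact ⟨hWmem a ha, hWmem b hb⟩
    · exact ⟨Finset.mem_erase.mpr ⟨h3, h1⟩, hWmem b (h4 ▸ hfW a h1 h2)⟩
    · exact ⟨hWmem a (h4 ▸ hfW b h1 h2), Finset.mem_erase.mpr ⟨h3, h1⟩⟩
  have hedges : ∀ F' ∈ (H.delete v).E, ((G'.induce (F' : Set ℕ)).Connected) := by
    intro F' hF'
    simp only [FinHypergraph.delete, Finset.mem_filter, Finset.mem_image] at hF'
    obtain ⟨⟨F, hF, rfl⟩, hcard⟩ := hF'
    have hFV : F ⊆ H.V := H.edge_sub F hF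
    -- f x lands in F ∩ W for x ∈ F.erase v outside W
    have hfmem : ∀ x ∈ F.erase v, x ∉ W → f x ∈ F ∩ W := by
      intro x hx hxW
      obtain ⟨hxv, hxF⟩ := Finset.mem_erase.mp hx
      have hxV : x ∈ H.V := hFV hxF
      have hfx : F ∈ H.edgesAt (f x) :=
        hfC x hxV hxW (Finset.mem_filter.mpr ⟨hF, hxF⟩)
      exact Finset.mem_inter.mpr ⟨(Finset.mem_filter.mp hfx).2, hfW x hxV hxW⟩
    have hne : (F.erase v).Nonempty := Finset.card_pos.mp (by omega)
    have hFWne : (F ∩ W).Nonempty := by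
      obtain ⟨x, hx⟩ := hne
      by_cases hxW : x ∈ W
      · exact ⟨x, Finset.mem_inter.mpr ⟨(Finset.mem_erase.mp hx).2, hxW⟩⟩
      · exact ⟨f x, hfmem x hx hxW⟩
    obtain ⟨w₀, hw₀⟩ := hFWne
    have hFWsub : ∀ x ∈ F ∩ W, x ∈ F.erase v := by
      intro x hx
      obtain ⟨h1, h2⟩ := Finset.mem_inter.mp hx
      exact Finset.mem_erase.mpr ⟨fun hxv => hvW (hxv ▸ h2), h1⟩
    have hw₀' : w₀ ∈ F.erase v := hFWsub w₀ hw₀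
    set S : Set ℕ := ((F.erase v : Finset ℕ) : Set ℕ) with hSdef
    have hmemS : ∀ x ∈ F.erase v, x ∈ S := fun x hx => Finset.mem_coe.mpr hx
    -- reachability inside F ∩ W
    have hreachW : ∀ x (hx : x ∈ F ∩ W),
        (G'.induce S).Reachable ⟨x, hmemS x (hFWsub x hx)⟩ ⟨w₀, hmemS w₀ hw₀'⟩ := by
      intro x hx
      by_cases h2 : 2 ≤ (F ∩ W).card
      · have hc := hconn F hF h2
        let φ : (G.induce ((F ∩ W : Finset ℕ) : Set ℕ)) →g (G'.induce S) :=
          { toFun := fun p => ⟨p.1, hmemS p.1 (hFWsub p.1 (Finset.mem_coe.mp p.2))⟩,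
            map_rel' := by
              intro a b hab
              exact ⟨G.ne_of_adj hab, Or.inl hab⟩ }
        have := (hc.preconnected ⟨x, Finset.mem_coe.mpr hx⟩
          ⟨w₀, Finset.mem_coe.mpr hw₀⟩).map φ
        exact this
      · have h1 : (F ∩ W).card = 1 := by
          have := Finset.card_pos.mpr ⟨w₀, hw₀⟩
          omega
        obtain ⟨y, hy⟩ := Finset.card_eq_one.mp h1
        have hx' : x = y := by simpa [hy] using hx
        have hw' : w₀ = y := by simpa [hy] using hw₀
        subst hw'
        subst hx'
        exact SimpleGraph.Reachable.refl _
    have hreach : ∀ x (hx : x ∈ F.erase v),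
        (G'.induce S).Reachable ⟨x, hmemS x hx⟩ ⟨w₀, hmemS w₀ hw₀'⟩ := by
      intro x hx
      by_cases hxW : x ∈ W
      · exact hreachW x (Finset.mem_inter.mpr ⟨(Finset.mem_erase.mp hx).2, hxW⟩)
      · obtain ⟨hxv, hxF⟩ := Finset.mem_erase.mp hx
        have hxV : x ∈ H.V := hFV hxF
        have hfx : f x ∈ F ∩ W := hfmem x hx hxW
        have hfx' : f x ∈ F.erase v := hFWsub _ hfx
        have hadj : (G'.induce S).Adj ⟨x, hmemS x hx⟩ ⟨f x, hmemS _ hfx'⟩ := by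
          refine ⟨?_, Or.inr (Or.inl ⟨hxV, hxW, hxv, rfl⟩)⟩
          intro hxf
          have hxf' : x = f x := by simpa using hxf
          exact hxW (hxf' ▸ hfW x hxV hxW)
        exact hadj.reachable.trans (hreachW (f x) hfx)
    rw [SimpleGraph.connected_iff]
    constructor
    · intro a b
      have ha := hreach a.1 (Finset.mem_coe.mp a.2)
      have hb := hreach b.1 (Finset.mem_coe.mp b.2)
      exact ha.trans hb.symm
    · exact ⟨⟨w₀, hmemS w₀ hw₀'⟩⟩
  refine ⟨G', ⟨hEW', hedges⟩, ?_⟩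
  have hsub : (((H.delete v).V : Set ℕ) ∩
      {x : ℕ | ∃ a b : ℕ, a ≠ b ∧ G'.Adj x a ∧ G'.Adj x b}) ⊆ (W : Set ℕ) := by
    rintro x ⟨hxV, a, b, hab, hxa, hxb⟩
    by_contra hxW
    have hxW' : x ∉ W := fun h => hxW (Finset.mem_coe.mpr h)
    have haux : ∀ c, G'.Adj x c → c = f x := by
      rintro c ⟨hne, h | ⟨h1, h2, h3, h4⟩ | ⟨h1, h2, h3, h4⟩⟩
      · exact absurd (hEW x c h).1 hxW'
      · exact h4
      · exact absurd (h4 ▸ hfW c h1 h2) hxW'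
    exact hab ((haux a hxa).trans (haux b hxb).symm)
  calc (((H.delete v).V : Set ℕ) ∩
      {x : ℕ | ∃ a b : ℕ, a ≠ b ∧ G'.Adj x a ∧ G'.Adj x b}).ncard
      ≤ (W : Set ℕ).ncard := Set.ncard_le_ncard hsub W.finite_toSet
    _ = W.card := Set.ncard_coe_finset W
    _ < ℓ := hW

/-- If the twin class of `v` has at least `ℓ ≥ 1` elements and `H`
has a representative support with fewer than `ℓ` vertices, then `H − v` has a
support in which fewer than `ℓ` vertices have degree greater than one. -/
theorem delete_twin_support_few_high_degree
    (ℓ : ℕ) (hℓ : 1 ≤ ℓ)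
    (H : FinHypergraph) (v : ℕ) (hv : v ∈ H.V)
    (htc : ℓ ≤ (H.twinClass v).card)
    (hrep : ∃ (W : Finset ℕ) (G : SimpleGraph ℕ), IsRepSupport H W G ∧ W.card < ℓ) :
    ∃ G' : SimpleGraph ℕ, IsSupport (H.delete v) G' ∧
      ((((H.delete v).V : Set ℕ) ∩
        {x : ℕ | ∃ a b : ℕ, a ≠ b ∧ G'.Adj x a ∧ G'.Adj x b}).ncard < ℓ) := by
  obtain ⟨W, G, hWG, hWcard⟩ := hrep
  by_cases hvW : v ∈ W
  · have hex : ∃ u ∈ H.twinClass v, u ∉ W := by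
      by_contra hc
      push_neg at hc
      have hsub : H.twinClass v ⊆ W := fun x hx => hc x hx
      have := Finset.card_le_card hsub
      omega
    obtain ⟨u, huT, huW⟩ := hex
    obtain ⟨huV, htw⟩ : u ∈ H.V ∧ H.edgesAt u = H.edgesAt v := by
      simpa [FinHypergraph.twinClass] using huT
    have hune : u ≠ v := fun h => huW (h ▸ hvW)
    set σ : ℕ ≃ ℕ := Equiv.swap u v with hσ
    set W' : Finset ℕ := insert u (W.erase v) with hW'
    obtain ⟨hWV, hEW, hconn, hcov⟩ := hWG
    have hσu : σ u = v := Equiv.swap_apply_left u v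
    have hσv : σ v = u := Equiv.swap_apply_right u v
    have hσx : ∀ x, x ≠ u → x ≠ v → σ x = x :=
      fun x h1 h2 => Equiv.swap_apply_of_ne_of_ne h1 h2
    have hσσ : ∀ x, σ (σ x) = x := fun x => Equiv.swap_apply_self u v x
    have hvW' : v ∉ W' := by
      intro h
      rcases Finset.mem_insert.mp h with h | h
      · exact hune h.symm
      · exact (Finset.mem_erase.mp h).1 rfl
    have hmemW' : ∀ x, x ∈ W' ↔ σ x ∈ W := by
      intro x
      rcases eq_or_ne x u with rfl | hxu
      · rw [hσu]; simp [hW', hvW]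
      rcases eq_or_ne x v with rfl | hxv
      · rw [hσv]
        constructor
        · intro h; exact absurd h hvW'
        · intro h; exact absurd h huW
      · rw [hσx x hxu hxv]
        constructor
        · intro h
          rcases Finset.mem_insert.mp h with h | h
          · exact absurd h hxu
          · exact (Finset.mem_erase.mp h).2
        · intro h; exact Finset.mem_insert_of_mem (Finset.mem_erase.mpr ⟨hxv, h⟩)
    set G'' := G.map σ.toEmbedding with hG''
    have hmap : ∀ a b, G''.Adj a b ↔ G.Adj (σ a) (σ b) := by
      intro a b
      rw [hG'', SimpleGraph.map_adj]
      constructor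
      · rintro ⟨a', b', h, rfl, rfl⟩
        show G.Adj (σ (σ a')) (σ (σ b'))
        rwa [hσσ, hσσ]
      · intro h; exact ⟨σ a, σ b, h, hσσ a, hσσ b⟩
    have hW'card : W'.card < ℓ := by
      have h1 : W'.card ≤ (W.erase v).card + 1 := by
        rw [hW']; exact Finset.card_insert_le u (W.erase v)
      have h2 := Finset.card_erase_of_mem hvW
      have h3 : 1 ≤ W.card := Finset.card_pos.mpr ⟨v, hvW⟩
      omega
    have hrep' : IsRepSupport H W' G'' := by
      refine ⟨?_, ?_, ?_, ?_⟩
      · intro x hx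
        rcases Finset.mem_insert.mp hx with rfl | h
        · exact huV
        · exact hWV (Finset.mem_of_mem_erase h)
      · intro a b hab
        rw [hmap] at hab
        obtain ⟨ha, hb⟩ := hEW _ _ hab
        exact ⟨(hmemW' a).mpr ha, (hmemW' b).mpr hb⟩
      · intro F hF hcard2
        have huvF : u ∈ F ↔ v ∈ F := by
          constructor
          · intro h
            have h1 : F ∈ H.edgesAt u := Finset.mem_filter.mpr ⟨hF, h⟩
            rw [htw] at h1; exact (Finset.mem_filter.mp h1).2
          · intro h
            have h1 : F ∈ H.edgesAt v := Finset.mem_filter.mpr ⟨hF, h⟩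
            rw [← htw] at h1; exact (Finset.mem_filter.mp h1).2
        have hFinv : ∀ x, σ x ∈ F ↔ x ∈ F := by
          intro x
          rcases eq_or_ne x u with rfl | hxu
          · rw [hσu]; exact huvF.symm
          rcases eq_or_ne x v with rfl | hxv
          · rw [hσv]; exact huvF
          · rw [hσx x hxu hxv]
        have hmemFW' : ∀ x, x ∈ F ∩ W' ↔ σ x ∈ F ∩ W := by
          intro x
          rw [Finset.mem_inter, Finset.mem_inter, ← hFinv x, hmemW']
        have hcardFW : 2 ≤ (F ∩ W).card := by
          have hle : (F ∩ W').card ≤ (F ∩ W).card := by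
            apply Finset.card_le_card_of_injOn σ
            · intro x hx; exact (hmemFW' x).mp hx
            · exact fun a _ b _ h => σ.injective h
          omega
        have hc := hconn F hF hcardFW
        let ψ : (G.induce ((F ∩ W : Finset ℕ) : Set ℕ)) →g
            (G''.induce ((F ∩ W' : Finset ℕ) : Set ℕ)) :=
          { toFun := fun p => ⟨σ p.1, by
              have hm : σ (σ p.1) ∈ F ∩ W := by
                rw [hσσ]; exact Finset.mem_coe.mp p.2
              exact Finset.mem_coe.mpr ((hmemFW' (σ p.1)).mpr hm)⟩,
            map_rel' := by
              intro a b hab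
              show G''.Adj (σ a.1) (σ b.1)
              rw [hmap, hσσ, hσσ]
              exact hab }
        have hsurj : Function.Surjective ψ := by
          rintro ⟨q, hq⟩
          refine ⟨⟨σ q, Finset.mem_coe.mpr ((hmemFW' q).mp (Finset.mem_coe.mp hq))⟩, ?_⟩
          apply Subtype.ext
          exact hσσ q
        exact hc.map ψ hsurj
      · intro x hx
        obtain ⟨hxV, hxW'⟩ := Finset.mem_sdiff.mp hx
        rcases eq_or_ne x v with rfl | hxv
        · refine ⟨u, Finset.mem_insert_self _ _, ?_⟩
          unfold FinHypergraph.Covers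
          rw [htw]
        · have hxW : x ∉ W := by
            intro h
            exact hxW' (Finset.mem_insert_of_mem (Finset.mem_erase.mpr ⟨hxv, h⟩))
          obtain ⟨w, hw, hwc⟩ := hcov x (Finset.mem_sdiff.mpr ⟨hxV, hxW⟩)
          rcases eq_or_ne w v with rfl | hwv
          · refine ⟨u, Finset.mem_insert_self _ _, ?_⟩
            unfold FinHypergraph.Covers at hwc ⊢
            rw [htw]; exact hwc
          · exact ⟨w, Finset.mem_insert_of_mem (Finset.mem_erase.mpr ⟨hwv, hw⟩), hwc⟩
    exact key_pendant ℓ H v W' G'' hrep' hW'card hvW'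
  · exact key_pendant ℓ H v W G hWG hWcard hvW
end
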